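/- For any probability distribution p on a countable set Z, any α > 1, and any ε ∈ (0,1), the ε-smooth min-entropy of p is at least the Rényi entropy of order α minus (1/(α-1))·log₂(1/ε); i.e., H_min^ε(p) ≥ H_α(p) − (1/(α−1))·log₂(1/ε). -/

import Mathlib

open Real

/-- Key construction: cap a distribution at level `lam` and redistribute the excess
mass greedily, staying below `lam`. -/
lemma exists_capped_q {Z : Type*} [Countable Z]
    (p : Z → ℝ) (hp : ∀ z, 0 ≤ p z) (hp1 : ∑' z, p z = 1)
    (lam : ℝ) (hlam : 0 < lam)
    (hcard : ∀ (_ : Fintype Z), (1:ℝ) ≤ (Fintype.card Z : ℝ) * lam) :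
    ∃ q : Z → ℝ, (∀ z, 0 ≤ q z) ∧ (∑' z, q z = 1) ∧
      (∑' z, |p z - q z|) ≤ 2 * (∑' z, (p z - min (p z) lam)) ∧ (∀ z, q z ≤ lam) := by
  classical
  have hps : Summable p := by
    by_contra h
    rw [tsum_eq_zero_of_not_summable h] at hp1
    exact one_ne_zero hp1.symm
  obtain ⟨ι, hι⟩ := exists_injective_nat Z
  set P : ℕ → ℝ := Function.extend ι p (fun _ => (0:ℝ)) with hPdef
  have hPap : ∀ z, P (ι z) = p z := fun z => hι.extend_apply p (fun _ => (0:ℝ)) z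
  have hPoff : ∀ n, n ∉ Set.range ι → P n = 0 := by
    intro n hn
    exact Function.extend_apply' p (fun _ => (0:ℝ)) n (by simpa using hn)
  have hP0 : ∀ n, 0 ≤ P n := by
    intro n
    by_cases hn : n ∈ Set.range ι
    · obtain ⟨z, rfl⟩ := hn; rw [hPap]; exact hp z
    · rw [hPoff n hn]
  -- transport tool
  have htrans : ∀ (f : ℕ → ℝ), (∀ n, n ∉ Set.range ι → f n = 0) →
      ∑' z, f (ι z) = ∑' n, f n := by
    intro f hf
    refine hι.tsum_eq ?_
    intro n hn
    simp only [Function.mem_support] at hn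
    by_contra hc
    exact hn (hf n hc)
  have hP1 : ∑' n, P n = 1 := by
    rw [← htrans P hPoff]
    simpa only [hPap] using hp1
  have hPs : Summable P := by
    by_contra h
    rw [tsum_eq_zero_of_not_summable h] at hP1
    exact one_ne_zero hP1.symm
  set M : ℕ → ℝ := fun n => min (P n) lam with hMdef
  have hM0 : ∀ n, 0 ≤ M n := fun n => le_min (hP0 n) hlam.le
  have hMP : ∀ n, M n ≤ P n := fun n => min_le_left _ _
  have hMlam : ∀ n, M n ≤ lam := fun n => min_le_right _ _
  have hMoff : ∀ n, n ∉ Set.range ι → M n = 0 := by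
    intro n hn; simp [hMdef, hPoff n hn, hlam.le]
  have hMs : Summable M := Summable.of_nonneg_of_le hM0 hMP hPs
  have hPMs : Summable (fun n => P n - M n) := hPs.sub hMs
  set m : ℝ := ∑' n, (P n - M n) with hmdef
  have hm0 : 0 ≤ m := tsum_nonneg (fun n => sub_nonneg.mpr (hMP n))
  have hMsum : ∑' n, M n = 1 - m := by
    have : m = 1 - ∑' n, M n := by
      rw [hmdef, hPs.tsum_sub hMs, hP1]
    linarith
  -- the Z-side excess equals m
  have hmZ : ∑' z, (p z - min (p z) lam) = m := by
    rw [hmdef, ← htrans (fun n => P n - M n)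
      (fun n hn => by simp [hMdef, hPoff n hn, hlam.le])]
    apply tsum_congr
    intro z
    simp [hMdef, hPap]
  -- capacities
  set c : ℕ → ℝ := fun n => if n ∈ Set.range ι then lam - M n else 0 with hcdef
  have hc0 : ∀ n, 0 ≤ c n := by
    intro n
    by_cases hn : n ∈ Set.range ι
    · simp only [hcdef]
      rw [if_pos hn]
      simpa [sub_nonneg] using hMlam n
    · simp only [hcdef]
      rw [if_neg hn]
  set G : ℕ → ℝ := fun N => ∑ n ∈ Finset.range N, c n with hGdef
  have hGmono : Monotone G := by
    intro a b hab
    exact Finset.sum_le_sum_of_subset_of_nonneg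
      (Finset.range_subset_range.mpr hab) (fun i _ _ => hc0 i)
  have hGsucc : ∀ n, G (n + 1) = G n + c n := by
    intro n; simp [hGdef, Finset.sum_range_succ]
  -- partial sums of minima over finite sets of Z
  have hsum_le_one : ∀ (s : Finset Z), ∑ z ∈ s, p z ≤ 1 := by
    intro s
    rw [← hp1]
    exact hps.sum_le_tsum s (fun z _ => hp z)
  have hGbig : ∀ (s : Finset Z),
      G ((s.sup ι) + 1) ≥ (s.card : ℝ) * lam - ∑ z ∈ s, min (p z) lam := by
    intro s
    have hsub : s.image ι ⊆ Finset.range (s.sup ι + 1) := by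
      intro n hn
      obtain ⟨z, hz, rfl⟩ := Finset.mem_image.mp hn
      exact Finset.mem_range.mpr (Nat.lt_succ_of_le (Finset.le_sup hz))
    have h1 : ∑ n ∈ s.image ι, c n ≤ G (s.sup ι + 1) :=
      Finset.sum_le_sum_of_subset_of_nonneg hsub (fun i _ _ => hc0 i)
    have h2 : ∑ n ∈ s.image ι, c n = ∑ z ∈ s, c (ι z) :=
      Finset.sum_image (fun x _ y _ h => hι h)
    have h3 : ∀ z, c (ι z) = lam - min (p z) lam := by
      intro z
      simp [hcdef, hMdef, hPap, Set.mem_range_self]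
    have h4 : ∑ z ∈ s, c (ι z) = s.card * lam - ∑ z ∈ s, min (p z) lam := by
      simp only [h3, Finset.sum_sub_distrib, Finset.sum_const, nsmul_eq_mul]
    rw [h2, h4] at h1
    linarith
  have hminsum_le : ∀ (s : Finset Z), ∑ z ∈ s, min (p z) lam ≤ 1 := by
    intro s
    refine le_trans (Finset.sum_le_sum (fun z _ => min_le_left (p z) lam)) (hsum_le_one s)
  obtain ⟨N₀, hN₀⟩ : ∃ N, m ≤ G N := by
    rcases finite_or_infinite Z with hZ | hZ
    · haveI : Fintype Z := Fintype.ofFinite Z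
      refine ⟨((Finset.univ : Finset Z).sup ι) + 1, ?_⟩
      have h1 := hGbig Finset.univ
      have h2 : ∑ z ∈ (Finset.univ : Finset Z), min (p z) lam = 1 - m := by
        rw [← tsum_fintype (L := SummationFilter.unconditional Z), ← hMsum,
          ← htrans M hMoff]
        apply tsum_congr
        intro z
        simp [hMdef, hPap]
      rw [h2] at h1
      have h3 := hcard inferInstance
      have h4 : (Finset.univ : Finset Z).card = Fintype.card Z := rfl
      rw [h4] at h1
      linarith
    · obtain ⟨k, hk⟩ := exists_nat_ge ((m + 1) / lam)
      obtain ⟨s, hs⟩ := Infinite.exists_subset_card_eq Z k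
      refine ⟨(s.sup ι) + 1, ?_⟩
      have h1 := hGbig s
      have h2 := hminsum_le s
      have h3 : m + 1 ≤ (k : ℝ) * lam := by
        rw [div_le_iff₀ hlam] at hk
        linarith
      rw [hs] at h1
      linarith
  -- greedy extra mass
  set extra : ℕ → ℝ := fun n => min m (G (n+1)) - min m (G n) with hexdef
  have hextra0 : ∀ n, 0 ≤ extra n :=
    fun n => sub_nonneg.mpr (min_le_min le_rfl (hGmono (Nat.le_succ n)))
  have hextrac : ∀ n, extra n ≤ c n := by
    intro n
    rcases le_total m (G n) with h | h
    · have h1 : min m (G n) = m := min_eq_left h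
      have h2 : min m (G (n+1)) = m := min_eq_left (h.trans (hGmono (Nat.le_succ n)))
      simp only [hexdef]
      rw [h1, h2]
      simpa using hc0 n
    · have h1 : min m (G n) = G n := min_eq_right h
      simp only [hexdef]
      rw [h1, hGsucc n]
      have h2 : min m (G n + c n) ≤ G n + c n := min_le_right _ _
      linarith
  have hextraz : ∀ n, N₀ ≤ n → extra n = 0 := by
    intro n hn
    have h1 : min m (G n) = m := min_eq_left (hN₀.trans (hGmono hn))
    have h2 : min m (G (n+1)) = m := min_eq_left (hN₀.trans (hGmono (hn.trans (Nat.le_succ n))))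
    simp only [hexdef]
    rw [h1, h2, sub_self]
  have hextras : Summable extra := summable_of_ne_finset_zero (s := Finset.range N₀)
    (fun n hn => hextraz n (Nat.le_of_not_lt (fun h => hn (Finset.mem_range.mpr h))))
  have hextrasum : ∑' n, extra n = m := by
    rw [tsum_eq_sum (s := Finset.range N₀)
      (fun n hn => hextraz n (Nat.le_of_not_lt (fun h => hn (Finset.mem_range.mpr h))))]
    simp only [hexdef]
    rw [Finset.sum_range_sub (fun n => min m (G n)) N₀]
    have hG0 : G 0 = 0 := by simp [hGdef]
    rw [hG0, min_eq_left hN₀, min_eq_right hm0]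
    ring
  -- the new distribution
  set q' : ℕ → ℝ := fun n => M n + extra n with hq'def
  have hq'0 : ∀ n, 0 ≤ q' n := fun n => add_nonneg (hM0 n) (hextra0 n)
  have hq'off : ∀ n, n ∉ Set.range ι → q' n = 0 := by
    intro n hn
    have h1 : c n = 0 := by simp only [hcdef]; rw [if_neg hn]
    have h2 : extra n = 0 := le_antisymm (h1 ▸ hextrac n) (hextra0 n)
    simp only [hq'def]
    rw [hMoff n hn, h2, add_zero]
  have hq'lam : ∀ n, q' n ≤ lam := by
    intro n
    by_cases hn : n ∈ Set.range ι
    · have h1 : c n = lam - M n := by simp only [hcdef]; rw [if_pos hn]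
      have h2 := hextrac n
      rw [h1] at h2
      simp only [hq'def]
      linarith
    · rw [hq'off n hn]; exact hlam.le
  have hq'sum : ∑' n, q' n = 1 := by
    simp only [hq'def]
    rw [hMs.tsum_add hextras, hMsum, hextrasum]
    ring
  refine ⟨fun z => q' (ι z), fun z => hq'0 _, ?_, ?_, fun z => hq'lam _⟩
  · rw [htrans q' hq'off]; exact hq'sum
  · have habs : ∀ n, |P n - q' n| ≤ (P n - M n) + extra n := by
      intro n
      simp only [hq'def]
      rw [show P n - (M n + extra n) = (P n - M n) - extra n by ring]
      refine abs_sub_le_iff.mpr ⟨?_, ?_⟩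
      · have := hextra0 n; linarith
      · have := sub_nonneg.mpr (hMP n); linarith
    have hmaj : Summable (fun n => (P n - M n) + extra n) := hPMs.add hextras
    have habss : Summable (fun n => |P n - q' n|) :=
      Summable.of_nonneg_of_le (fun n => abs_nonneg _) habs hmaj
    have h1 : ∑' z, |p z - q' (ι z)| = ∑' n, |P n - q' n| := by
      rw [← htrans (fun n => |P n - q' n|)
        (fun n hn => by show |P n - q' n| = 0; rw [hPoff n hn, hq'off n hn]; simp)]
      apply tsum_congr
      intro z
      rw [hPap z]
    rw [h1, hmZ]
    calc ∑' n, |P n - q' n| ≤ ∑' n, ((P n - M n) + extra n) :=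
          habss.tsum_le_tsum habs hmaj
      _ = m + m := by rw [hPMs.tsum_add hextras, hextrasum]
      _ = 2 * m := by ring

lemma bddAbove_entropy_set {Z : Type*} [Countable Z] [Nonempty Z]
    (p : Z → ℝ) (hp : ∀ z, 0 ≤ p z) (hp1 : ∑' z, p z = 1)
    (ε : ℝ) (hε : ε ∈ Set.Ioo (0 : ℝ) 1) :
    BddAbove {x : ℝ | ∃ q : Z → ℝ, (∀ z, 0 ≤ q z) ∧ (∑' z, q z = 1) ∧
        (1/2) * (∑' z, |p z - q z|) ≤ ε ∧ x = -Real.logb 2 (⨆ z, q z)} := by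
  classical
  have hps : Summable p := by
    by_contra h
    rw [tsum_eq_zero_of_not_summable h] at hp1
    exact one_ne_zero hp1.symm
  have h1 : HasSum p 1 := hp1 ▸ hps.hasSum
  have hlt : (1+ε)/2 < 1 := by linarith [hε.2]
  obtain ⟨F, hF⟩ : ∃ F : Finset Z, (1+ε)/2 < ∑ z ∈ F, p z :=
    (h1.eventually (eventually_gt_nhds hlt)).exists
  set δ : ℝ := (1-ε)/2 / (F.card) with hδ
  have hFne : F.Nonempty := by
    rcases Finset.eq_empty_or_nonempty F with h | h
    · exfalso
      rw [h] at hF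
      simp only [Finset.sum_empty] at hF
      linarith [hε.1]
    · exact h
  have hcard : (0:ℝ) < F.card := by exact_mod_cast Finset.card_pos.mpr hFne
  have hδpos : 0 < δ := by
    apply div_pos _ hcard
    linarith [hε.2]
  refine ⟨-Real.logb 2 δ, ?_⟩
  rintro x ⟨q, hq0, hq1, hqTV, rfl⟩
  have hqs : Summable q := by
    by_contra h
    rw [tsum_eq_zero_of_not_summable h] at hq1
    exact one_ne_zero hq1.symm
  have habs_s : Summable (fun z => |p z - q z|) := by
    apply Summable.of_nonneg_of_le (fun z => abs_nonneg _) (fun z => ?_) (hps.add hqs)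
    exact abs_sub_le_iff.mpr ⟨by linarith [hq0 z, hp z], by linarith [hq0 z, hp z]⟩
  have hposs : Summable (fun z => max (p z - q z) 0) :=
    Summable.of_nonneg_of_le (fun z => le_max_right _ _)
      (fun z => max_le (le_abs_self _) (abs_nonneg _)) habs_s
  have hpossum : ∑' z, max (p z - q z) 0 ≤ ε := by
    have heq : ∀ z, max (p z - q z) 0 = ((p z - q z) + |p z - q z|)/2 := by
      intro z
      rcases le_total (p z) (q z) with h | h
      · rw [max_eq_right (by linarith : p z - q z ≤ 0), abs_of_nonpos (by linarith)]
        ring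
      · rw [max_eq_left (by linarith : (0:ℝ) ≤ p z - q z), abs_of_nonneg (by linarith)]
        ring
    have h2 : ∑' z, ((p z - q z) + |p z - q z|)/2
        = ((∑' z, (p z - q z)) + ∑' z, |p z - q z|)/2 := by
      rw [← (hps.sub hqs).tsum_add habs_s, tsum_div_const]
    have h3 : ∑' z, (p z - q z) = 0 := by
      rw [hps.tsum_sub hqs, hp1, hq1, sub_self]
    calc ∑' z, max (p z - q z) 0 = ∑' z, ((p z - q z) + |p z - q z|)/2 := tsum_congr heq
      _ = ((∑' z, (p z - q z)) + ∑' z, |p z - q z|)/2 := h2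
      _ = (∑' z, |p z - q z|)/2 := by rw [h3]; ring
      _ ≤ ε := by linarith [hqTV]
  have hFq : (1-ε)/2 ≤ ∑ z ∈ F, q z := by
    have h2 : ∑ z ∈ F, (p z - q z) ≤ ∑' z, max (p z - q z) 0 := by
      refine le_trans (Finset.sum_le_sum (fun z _ => le_max_left (p z - q z) 0)) ?_
      exact hposs.sum_le_tsum F (fun z _ => le_max_right _ _)
    have h3 : ∑ z ∈ F, (p z - q z) = ∑ z ∈ F, p z - ∑ z ∈ F, q z :=
      Finset.sum_sub_distrib _ _
    linarith [hF]
  obtain ⟨z₀, hz₀F, hz₀⟩ : ∃ z ∈ F, δ ≤ q z := by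
    by_contra h
    push_neg at h
    have hlt2 : ∑ z ∈ F, q z < ∑ _z ∈ F, δ :=
      Finset.sum_lt_sum_of_nonempty hFne h
    rw [Finset.sum_const, nsmul_eq_mul] at hlt2
    have : (F.card : ℝ) * δ = (1-ε)/2 := by
      rw [hδ, mul_comm, div_mul_cancel₀ _ hcard.ne']
    linarith
  have hbdd : BddAbove (Set.range q) := by
    refine ⟨1, ?_⟩
    rintro _ ⟨z, rfl⟩
    exact (hqs.le_tsum z (fun j _ => hq0 j)).trans_eq hq1
  have hsup : δ ≤ ⨆ z, q z := hz₀.trans (le_ciSup hbdd z₀)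
  have hlog : Real.logb 2 δ ≤ Real.logb 2 (⨆ z, q z) :=
    Real.logb_le_logb_of_le one_lt_two hδpos hsup
  linarith

/-- For any probability distribution `p` on a countable set `Z`, any `α > 1`,
and any `ε ∈ (0,1)`, the `ε`-smooth min-entropy of `p` is at least the Rényi entropy of
order `α` minus `(1/(α-1)) * log₂ (1/ε)`. Here the min-entropy of `q` is
`-log₂ (⨆ z, q z)`, the Rényi entropy of order `α` is `(1/(1-α)) * log₂ (∑' z, (p z)^α)`,
and the smooth min-entropy is the supremum of min-entropies of distributions within total
variation distance `ε` of `p`. -/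
theorem smooth_min_entropy_ge_renyi
    {Z : Type*} [Countable Z] [Nonempty Z]
    (p : Z → ℝ) (hp : ∀ z, 0 ≤ p z) (hp1 : ∑' z, p z = 1)
    (α : ℝ) (hα : 1 < α) (ε : ℝ) (hε : ε ∈ Set.Ioo (0 : ℝ) 1) :
    sSup {x : ℝ | ∃ q : Z → ℝ, (∀ z, 0 ≤ q z) ∧ (∑' z, q z = 1) ∧
        (1/2) * (∑' z, |p z - q z|) ≤ ε ∧ x = -Real.logb 2 (⨆ z, q z)}
      ≥ (1/(1-α)) * Real.logb 2 (∑' z, (p z) ^ α)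
        - (1/(α-1)) * Real.logb 2 (1/ε) := by
  classical
  obtain ⟨hε0, hε1⟩ := hε
  have hα1 : (0:ℝ) < α - 1 := by linarith
  have hps : Summable p := by
    by_contra h
    rw [tsum_eq_zero_of_not_summable h] at hp1
    exact one_ne_zero hp1.symm
  have hple1 : ∀ z, p z ≤ 1 := fun z =>
    (hps.le_tsum z (fun j _ => hp j)).trans_eq hp1
  have hpows : Summable (fun z => (p z)^α) := by
    apply Summable.of_nonneg_of_le (fun z => Real.rpow_nonneg (hp z) α) (fun z => ?_) hps
    rcases eq_or_lt_of_le (hp z) with h | h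
    · rw [← h, Real.zero_rpow (by linarith : α ≠ 0)]
    · calc (p z)^α ≤ (p z)^(1:ℝ) :=
            Real.rpow_le_rpow_of_exponent_ge h (hple1 z) hα.le
        _ = p z := Real.rpow_one _
  set A := ∑' z, (p z)^α with hA
  have hApos : 0 < A := by
    obtain ⟨z, hz⟩ : ∃ z, 0 < p z := by
      by_contra h
      push_neg at h
      have h0 : ∀ z, p z = 0 := fun z => le_antisymm (h z) (hp z)
      rw [tsum_congr h0, tsum_zero] at hp1
      exact one_ne_zero hp1.symm
    have h1 := hpows.le_tsum z (fun j _ => Real.rpow_nonneg (hp j) α)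
    have h2 : 0 < (p z)^α := Real.rpow_pos_of_pos hz α
    rw [hA]
    linarith
  set lam := (A/ε)^(1/(α-1)) with hlamdef
  have hAε : 0 < A/ε := div_pos hApos hε0
  have hlampos : 0 < lam := Real.rpow_pos_of_pos hAε _
  have hmins : Summable (fun z => min (p z) lam) :=
    Summable.of_nonneg_of_le (fun z => le_min (hp z) hlampos.le)
      (fun z => min_le_left _ _) hps
  -- Markov bound on the excess mass
  have hmbound : ∑' z, (p z - min (p z) lam) ≤ ε := by
    have hpt : ∀ z, p z - min (p z) lam ≤ (p z)^α * lam^(1-α) := by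
      intro z
      rcases le_total (p z) lam with h | h
      · rw [min_eq_left h, sub_self]
        exact mul_nonneg (Real.rpow_nonneg (hp z) α) (Real.rpow_nonneg hlampos.le _)
      · rw [min_eq_right h]
        have hpz : 0 < p z := lt_of_lt_of_le hlampos h
        have h1 : lam^(α-1) ≤ (p z)^(α-1) := Real.rpow_le_rpow hlampos.le h (by linarith)
        have h2 : (0:ℝ) < lam^(α-1) := Real.rpow_pos_of_pos hlampos _
        have hsplit : p z ^ α = p z * p z ^ (α-1) := by
          have hh := Real.rpow_add hpz 1 (α-1)
          rw [Real.rpow_one] at hh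
          rw [show (1:ℝ) + (α-1) = α by ring] at hh
          exact hh
        have h3 : (p z)^α * lam^(1-α) = p z * ((p z)^(α-1) * (lam^(α-1))⁻¹) := by
          rw [show (1-α) = -(α-1) by ring, Real.rpow_neg hlampos.le, hsplit, mul_assoc]
        rw [h3]
        have h4 : 1 ≤ (p z)^(α-1) * (lam^(α-1))⁻¹ := by
          rw [← div_eq_mul_inv]
          exact (one_le_div h2).mpr h1
        nlinarith [hpz.le]
    have hsub : Summable (fun z => p z - min (p z) lam) := hps.sub hmins
    have hmaj : Summable (fun z => (p z)^α * lam^(1-α)) := hpows.mul_right _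
    have hkey := hsub.tsum_le_tsum hpt hmaj
    rw [tsum_mul_right, ← hA] at hkey
    have hlc : A * lam^(1-α) = ε := by
      have hexp : (1/(α-1)) * (1-α) = -1 := by
        field_simp
        ring
      rw [hlamdef, ← Real.rpow_mul hAε.le, hexp, Real.rpow_neg_one, inv_div,
        mul_comm, div_mul_cancel₀ _ hApos.ne']
    linarith [hkey, hlc]
  -- the cardinality condition for the construction
  have hcard : ∀ (_ : Fintype Z), (1:ℝ) ≤ (Fintype.card Z : ℝ) * lam := by
    intro inst
    set cZ := (Fintype.card Z : ℝ) with hcZ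
    have hc1 : (1:ℝ) ≤ cZ := by
      rw [hcZ]
      exact_mod_cast Fintype.card_pos
    have hc0 : (0:ℝ) < cZ := by linarith
    have hsump : ∑ z, p z = 1 := by rw [← tsum_fintype (L := SummationFilter.unconditional Z)]; exact hp1
    have hpm := Real.rpow_arith_mean_le_arith_mean_rpow Finset.univ (fun _ => 1/cZ) p
      (fun i _ => by positivity)
      (by rw [Finset.sum_const, nsmul_eq_mul, Finset.card_univ, ← hcZ]
          exact mul_one_div_cancel hc0.ne')
      (fun i _ => hp i) hα.le
    have hL : (∑ i, (1/cZ) * p i) = 1/cZ := by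
      rw [← Finset.mul_sum, hsump, mul_one]
    have hR : ∑ i, (1/cZ) * (p i)^α = (1/cZ) * A := by
      rw [← Finset.mul_sum, hA, tsum_fintype]
    rw [hL, hR] at hpm
    have h5 : (1/cZ)^α = cZ^(-α) := by
      rw [one_div, Real.inv_rpow hc0.le, ← Real.rpow_neg hc0.le]
    have h6 : cZ * cZ^(-α) = cZ^(1-α) := by
      rw [show (1-α) = 1 + (-α) by ring, Real.rpow_add hc0, Real.rpow_one]
    rw [h5] at hpm
    have hAc : cZ^(1-α) ≤ A := by
      have h7 := mul_le_mul_of_nonneg_left hpm hc0.le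
      rw [h6] at h7
      have h8 : cZ * (1/cZ * A) = A := by
        field_simp
      linarith [h7, h8.le, h8.ge]
    have h7 : A ≤ A/ε := by
      rw [le_div_iff₀ hε0]
      nlinarith [hApos]
    have h9 : (cZ^(1-α))^(1/(α-1)) ≤ lam :=
      Real.rpow_le_rpow (Real.rpow_nonneg hc0.le _) (hAc.trans h7) (by positivity)
    have h10 : (cZ^(1-α))^(1/(α-1)) = cZ⁻¹ := by
      rw [← Real.rpow_mul hc0.le, show (1-α)*(1/(α-1)) = -1 by field_simp; ring,
        Real.rpow_neg_one]
    rw [h10] at h9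
    calc (1:ℝ) = cZ * cZ⁻¹ := (mul_inv_cancel₀ hc0.ne').symm
      _ ≤ cZ * lam := mul_le_mul_of_nonneg_left h9 hc0.le
  obtain ⟨q, hq0, hq1, hqTV, hqlam⟩ := exists_capped_q p hp hp1 lam hlampos hcard
  have hbddq : BddAbove (Set.range q) := ⟨lam, by rintro _ ⟨z, rfl⟩; exact hqlam z⟩
  have hsuppos : 0 < ⨆ z, q z := by
    obtain ⟨z, hz⟩ : ∃ z, 0 < q z := by
      by_contra h
      push_neg at h
      have h0 : ∀ z, q z = 0 := fun z => le_antisymm (h z) (hq0 z)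
      rw [tsum_congr h0, tsum_zero] at hq1
      exact one_ne_zero hq1.symm
    exact lt_of_lt_of_le hz (le_ciSup hbddq z)
  have hsuple : (⨆ z, q z) ≤ lam := ciSup_le hqlam
  have hlogle : Real.logb 2 (⨆ z, q z) ≤ Real.logb 2 lam :=
    Real.logb_le_logb_of_le one_lt_two hsuppos hsuple
  have hval : -Real.logb 2 lam
      = (1/(1-α)) * Real.logb 2 A - (1/(α-1)) * Real.logb 2 (1/ε) := by
    rw [hlamdef, Real.logb_rpow_eq_mul_logb_of_pos hAε,
      Real.logb_div hApos.ne' hε0.ne', one_div ε, Real.logb_inv]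
    have h1α : (1:ℝ)/(1-α) = -(1/(α-1)) := by
      rw [show (1:ℝ)-α = -(α-1) by ring, div_neg]
    rw [h1α]
    ring
  have hmem : -Real.logb 2 (⨆ z, q z) ∈ {x : ℝ | ∃ q : Z → ℝ, (∀ z, 0 ≤ q z) ∧
      (∑' z, q z = 1) ∧ (1/2) * (∑' z, |p z - q z|) ≤ ε ∧
      x = -Real.logb 2 (⨆ z, q z)} :=
    ⟨q, hq0, hq1, by linarith [hqTV, hmbound], rfl⟩
  have hle := le_csSup (bddAbove_entropy_set p hp hp1 ε ⟨hε0, hε1⟩) hmem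
  calc (1/(1-α)) * Real.logb 2 A - (1/(α-1)) * Real.logb 2 (1/ε)
      = -Real.logb 2 lam := hval.symm
    _ ≤ -Real.logb 2 (⨆ z, q z) := by linarith
    _ ≤ _ := hle
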